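/- Let 0 < β < 1, t₀ > 0 and 0 < δ < 1/2. If s_N > (2/β)·artanh( tan(πβ(1 − 2δ)/2) / tan(πβ/2) ) + ln t₀, then ∫_{s_N}^{∞} f_RQ(s) ds < δ. -/

import Mathlib

open MeasureTheory Real Filter

lemma my_tanh_eq (x : ℝ) :
    Real.tanh x = (1 - Real.exp (-(2*x))) / (1 + Real.exp (-(2*x))) := by
  have h2 : Real.exp (-(2*x)) = Real.exp (-x) * Real.exp (-x) := by
    rw [← Real.exp_add]; ring_nf
  have hx : Real.exp x * Real.exp (-x) = 1 := by rw [← Real.exp_add]; simp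
  have hpos : (0:ℝ) < Real.exp x + Real.exp (-x) := by positivity
  have hpos2 : (0:ℝ) < 1 + Real.exp (-(2*x)) := by positivity
  rw [Real.tanh_eq_sinh_div_cosh, Real.sinh_eq, Real.cosh_eq]
  have hh : (Real.exp x - Real.exp (-x)) / 2 / ((Real.exp x + Real.exp (-x)) / 2)
      = (Real.exp x - Real.exp (-x)) / (Real.exp x + Real.exp (-x)) := by
    rw [div_div_div_comm]; norm_num
  rw [hh]
  rw [div_eq_div_iff hpos.ne' hpos2.ne']
  have key : Real.exp x * Real.exp (-(2*x)) = Real.exp (-x) := by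
    rw [← Real.exp_add]; ring_nf
  linear_combination 2 * key

lemma my_hasDerivAt_tanh (x : ℝ) :
    HasDerivAt Real.tanh (1 / Real.cosh x ^ 2) x := by
  have h := (Real.hasDerivAt_sinh x).div (Real.hasDerivAt_cosh x) (Real.cosh_pos x).ne'
  have hf : (fun y => Real.sinh y / Real.cosh y) = Real.tanh := by
    funext y; rw [Real.tanh_eq_sinh_div_cosh]
  rw [show (Real.sinh / Real.cosh) = Real.tanh from hf] at h
  refine h.congr_deriv ?_
  rw [← Real.cosh_sq_sub_sinh_sq x]; ring

lemma my_tanh_strictMono : StrictMono Real.tanh := by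
  apply strictMono_of_deriv_pos
  intro x
  rw [(my_hasDerivAt_tanh x).deriv]
  positivity

lemma my_tendsto_tanh : Tendsto Real.tanh atTop (nhds 1) := by
  have h1 : Tendsto (fun x : ℝ => Real.exp (-(2*x))) atTop (nhds 0) :=
    Real.tendsto_exp_neg_atTop_nhds_zero.comp
      (Filter.Tendsto.const_mul_atTop two_pos tendsto_id)
  have c1 : Tendsto (fun _ : ℝ => (1:ℝ)) atTop (nhds 1) := tendsto_const_nhds
  have h := Filter.Tendsto.div (c1.sub h1) (c1.add h1) (by norm_num : (1:ℝ) + 0 ≠ 0)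
  have h' : Tendsto (fun x : ℝ => (1 - Real.exp (-(2*x))) / (1 + Real.exp (-(2*x))))
      atTop (nhds 1) := by
    convert h using 2 <;> norm_num
  exact h'.congr fun x => (my_tanh_eq x).symm

lemma my_tanh_artanh {x : ℝ} (h0 : 0 < x) (h1 : x < 1) :
    Real.tanh ((1/2) * Real.log ((1+x)/(1-x))) = x := by
  have hp : (0:ℝ) < (1+x)/(1-x) := div_pos (by linarith) (by linarith)
  have he : Real.exp (-(2 * ((1/2) * Real.log ((1+x)/(1-x))))) = (1-x)/(1+x) := by
    rw [show -(2 * ((1/2) * Real.log ((1+x)/(1-x)))) = - Real.log ((1+x)/(1-x)) by ring,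
      Real.exp_neg, Real.exp_log hp, inv_div]
  rw [my_tanh_eq, he]
  have h1x : (0:ℝ) < 1 + x := by linarith
  rw [div_eq_iff (by
    have : (0:ℝ) < (1-x)/(1+x) := div_pos (by linarith) h1x
    positivity)]
  field_simp
  ring

lemma key_identity (S C sh ch p b : ℝ) (hC : C ≠ 0) (hch : ch ≠ 0) (hp : p ≠ 0) (hb : b ≠ 0)
    (hpy : S^2 + C^2 = 1) (hhy : ch^2 - sh^2 = 1) :
    (2*S*C) / (2*p*((2*ch^2-1) + (2*C^2-1)))
      = 1/(p*b) * (1/(1 + (sh/ch * (S/C))^2) * (1/ch^2 * (b/2) * (S/C))) := by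
  have hC2 : (0:ℝ) < C^2 := by positivity
  have hd2 : (0:ℝ) < sh^2 + C^2 := by positivity
  have hd1 : (2*ch^2-1) + (2*C^2-1) = 2*(sh^2 + C^2) := by linarith
  have h1p : (0:ℝ) < 1 + (sh/ch * (S/C))^2 := by positivity
  rw [hd1]
  field_simp
  linear_combination (S*sh^2) * hpy + (S*C^2) * hhy

/-- The Cole–Cole (RQ) distribution of relaxation times in the variable `s = ln t`. -/
noncomputable def fRQ (β t₀ : ℝ) (s : ℝ) : ℝ :=
  Real.sin (β * π) / (2 * π * (Real.cosh (β * (s - Real.log t₀)) + Real.cos (β * π)))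

/-- The inverse hyperbolic tangent. -/
noncomputable def artanh (x : ℝ) : ℝ := (1 / 2) * Real.log ((1 + x) / (1 - x))

/-- **Sufficient condition for a small upper truncation error of the RQ distribution.**
For `0 < β < 1`, `t₀ > 0`, `0 < δ < 1/2`, if
`s_N > (2/β) artanh(tan(πβ(1 − 2δ)/2)/tan(πβ/2)) + ln t₀` then
`∫_{s_N}^{∞} f_RQ(s) ds < δ`. -/
theorem fRQ_upper_truncation_small (β t₀ δ sN : ℝ) (hβ₀ : 0 < β) (hβ₁ : β < 1)
    (ht₀ : 0 < t₀) (hδ₀ : 0 < δ) (hδ₁ : δ < 1 / 2)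
    (hsN : sN > (2 / β) * _root_.artanh (Real.tan (π * β * (1 - 2 * δ) / 2) /
      Real.tan (π * β / 2)) + Real.log t₀) :
    ∫ s in Set.Ioi sN, fRQ β t₀ s < δ := by
  have hπ := Real.pi_pos
  set L := Real.log t₀ with hL
  set a := π * β / 2 with ha
  have ha0 : 0 < a := by positivity
  have ha2 : a < π / 2 := by
    rw [ha, div_lt_div_iff₀ two_pos two_pos]
    nlinarith
  have hca : 0 < Real.cos a := Real.cos_pos_of_mem_Ioo ⟨by linarith, ha2⟩
  have hsa : 0 < Real.sin a := Real.sin_pos_of_pos_of_lt_pi ha0 (by linarith)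
  set k := Real.tan a with hk
  have hk0 : 0 < k := Real.tan_pos_of_pos_of_lt_pi_div_two ha0 ha2
  set F : ℝ → ℝ := fun s => (1/(π*β)) * Real.arctan (Real.tanh (β*(s - L)/2) * k) with hF
  -- the derivative of F is fRQ
  have hderiv : ∀ s : ℝ, HasDerivAt F (fRQ β t₀ s) s := by
    intro s
    have hu : HasDerivAt (fun s : ℝ => β*(s - L)/2) (β/2) s := by
      have h := (((hasDerivAt_id s).sub_const L).const_mul β).div_const 2
      simpa using h
    have h2 := (my_hasDerivAt_tanh (β*(s-L)/2)).comp s hu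
    have h3 := h2.mul_const k
    have h4 := (Real.hasDerivAt_arctan (Real.tanh (β*(s-L)/2) * k)).comp s h3
    have h5 := h4.const_mul (1/(π*β))
    have hFeq : F = fun x => (1/(π*β)) *
        (Real.arctan ∘ fun s => (Real.tanh ∘ fun s : ℝ => β*(s - L)/2) s * k) x := rfl
    rw [hFeq]
    refine h5.congr_deriv (Eq.symm ?_)
    -- value identity
    set u := β*(s - L)/2 with hu'
    have hch : Real.cosh u ≠ 0 := (Real.cosh_pos u).ne'
    have h2u : β * (s - L) = 2 * u := by rw [hu']; ring
    have h2a : β * π = 2 * a := by rw [ha]; ring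
    have e1 : Real.cosh (β*(s - L)) = 2 * Real.cosh u ^ 2 - 1 := by
      rw [h2u, Real.cosh_two_mul]
      linarith [Real.cosh_sq_sub_sinh_sq u]
    have e2 : Real.cos (β*π) = 2 * Real.cos a ^ 2 - 1 := by
      rw [h2a, Real.cos_two_mul]
    have e3 : Real.sin (β*π) = 2 * Real.sin a * Real.cos a := by
      rw [h2a, Real.sin_two_mul]
    have e4 : Real.tanh u = Real.sinh u / Real.cosh u := Real.tanh_eq_sinh_div_cosh u
    have e5 : k = Real.sin a / Real.cos a := Real.tan_eq_sin_div_cos a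
    show fRQ β t₀ s = 1/(π*β) * (1 / (1 + (Real.tanh u * k)^2) * (1 / Real.cosh u ^ 2 * (β/2) * k))
    rw [fRQ, ← hL, e1, e2, e3, e4, e5]
    exact key_identity (Real.sin a) (Real.cos a) (Real.sinh u) (Real.cosh u) π β
      hca.ne' hch hπ.ne' hβ₀.ne' (Real.sin_sq_add_cos_sq a) (Real.cosh_sq_sub_sinh_sq u)
  -- F tends to 1/2 at infinity
  have hut : Tendsto (fun s : ℝ => β*(s - L)/2) atTop atTop := by
    refine Filter.tendsto_atTop_atTop.2 fun b => ⟨2*b/β + L, fun x hx => ?_⟩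
    have h1 : 2*b/β ≤ x - L := by linarith
    have h2 : 2*b ≤ (x - L) * β := (div_le_iff₀ hβ₀).mp h1
    linarith
  have htend : Tendsto F atTop (nhds (1/2 : ℝ)) := by
    have h1 : Tendsto (fun s : ℝ => Real.tanh (β*(s - L)/2)) atTop (nhds 1) :=
      my_tendsto_tanh.comp hut
    have h2 : Tendsto (fun s : ℝ => Real.tanh (β*(s - L)/2) * k) atTop (nhds (1 * k)) :=
      h1.mul_const k
    have h3 := (Real.continuous_arctan.continuousAt (x := 1 * k)).tendsto.comp h2
    have h4 := h3.const_mul (1/(π*β))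
    have hval : (1/(π*β)) * Real.arctan (1 * k) = 1/2 := by
      rw [one_mul, hk, Real.arctan_tan (by linarith) ha2, ha]
      field_simp
    rw [hval] at h4
    exact h4
  -- nonnegativity of fRQ
  have hnonneg : ∀ x ∈ Set.Ioi sN, 0 ≤ fRQ β t₀ x := by
    intro x _
    have hs : 0 < Real.sin (β * π) := Real.sin_pos_of_pos_of_lt_pi (by positivity) (by nlinarith)
    have hc : -1 < Real.cos (β * π) := by
      rw [show β * π = 2 * a by rw [ha]; ring, Real.cos_two_mul]
      nlinarith
    have hch := Real.one_le_cosh (β * (x - L))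
    apply div_nonneg hs.le
    nlinarith
  -- compute the integral
  rw [MeasureTheory.integral_Ioi_of_hasDerivAt_of_nonneg' (fun x _ => hderiv x) hnonneg htend]
  -- final estimate
  set θ := π * β * (1 - 2*δ) / 2 with hθ
  have hθ0 : 0 < θ := div_pos (mul_pos (mul_pos hπ hβ₀) (by linarith)) two_pos
  have hθa : θ < a := by
    rw [hθ, ha, div_lt_div_iff₀ two_pos two_pos]
    nlinarith
  have htan : Real.tan θ < k := by
    rw [hk]
    exact Real.strictMonoOn_tan ⟨by linarith, by linarith⟩ ⟨by linarith, ha2⟩ hθa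
  have htanθ : 0 < Real.tan θ := Real.tan_pos_of_pos_of_lt_pi_div_two hθ0 (by linarith)
  set x := Real.tan θ / k with hx
  have hx0 : 0 < x := div_pos htanθ hk0
  have hx1 : x < 1 := (div_lt_one hk0).mpr htan
  set A := _root_.artanh x with hA
  have h1 : (2/β) * A < sN - L := by
    rw [hL]; linarith [hsN]
  have h2 : A < β * (sN - L) / 2 := by
    have h3 := mul_lt_mul_of_pos_left h1 hβ₀
    have h4 : β * ((2/β) * A) = 2 * A := by field_simp
    rw [h4] at h3
    linarith
  have h5 : Real.tanh A = x := by
    rw [hA, _root_.artanh]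
    exact my_tanh_artanh hx0 hx1
  have h6 : x < Real.tanh (β * (sN - L) / 2) := by
    rw [← h5]; exact my_tanh_strictMono h2
  have h7 : Real.tan θ < Real.tanh (β * (sN - L) / 2) * k := by
    have := mul_lt_mul_of_pos_right h6 hk0
    rw [hx, div_mul_cancel₀ _ hk0.ne'] at this
    exact this
  have h8 : θ < Real.arctan (Real.tanh (β * (sN - L) / 2) * k) := by
    have := Real.arctan_strictMono h7
    rwa [Real.arctan_tan (by linarith) (by linarith)] at this
  have h9 : (1/(π*β)) * θ < F sN := by
    rw [hF]
    exact mul_lt_mul_of_pos_left h8 (by positivity)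
  have h10 : (1/(π*β)) * θ = 1/2 - δ := by
    rw [hθ]; field_simp
  rw [h10] at h9
  linarith
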